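/- Fix n ≥ 1 and a ≥ 1, and let P_a be the n×n matrix defined below. Then the eigenvalues of P_a form the geometric series 1, 1/a, 1/a^2, …, 1/a^{n−1}: the characteristic polynomial of P_a equals ∏_{m=0}^{n−1} (X − a^{−m}). -/

import Mathlib

/-- The transition matrix following a single card through a GSR `a`-shuffle of an `n`-card
deck: `P_a(i,j)` (with `1`-based positions `i.val+1`, `j.val+1`) is the chance that the card
at position `i` moves to position `j`. -/
def singleCardMatrix (n a : ℕ) : Matrix (Fin n) (Fin n) ℚ := fun i j =>
  ((∑ k ∈ Finset.Icc 1 a,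
      ∑ r ∈ Finset.Icc ((i.val + 1) + (j.val + 1) - (n + 1)) (min i.val j.val),
        Nat.choose j.val r * Nat.choose (n - (j.val + 1)) (i.val - r) * k ^ r *
          (a - k) ^ (j.val - r) * (k - 1) ^ (i.val - r) *
          (a - k + 1) ^ ((n - (j.val + 1)) - (i.val - r)) : ℕ) : ℚ) / (a : ℚ) ^ n

open Finset Polynomial fwdDiff

open Finset

/-- Key factor lemma: absorb `choose`-revision and the binomial theorem. -/
lemma keyB (M i e x y : ℕ) (hiM : i ≤ M) :
    ∑ r ∈ range (M+1), i.choose r * r.choose e * x^r * y^(i-r)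
      = i.choose e * x^e * (x+y)^(i-e) := by
  by_cases he : e ≤ i
  · have hsub : Icc e i ⊆ range (M+1) := by
      intro r hr; simp only [mem_Icc] at hr; simp only [mem_range]; omega
    rw [← Finset.sum_subset hsub (by
      intro r hr hnr
      simp only [mem_range] at hr
      simp only [mem_Icc, not_and_or, not_le] at hnr
      rcases hnr with h | h
      · rw [Nat.choose_eq_zero_of_lt h]; ring
      · rw [Nat.choose_eq_zero_of_lt h]; ring)]
    rw [← Finset.Ico_add_one_right_eq_Icc, Finset.sum_Ico_eq_sum_range]
    have h1 : i + 1 - e = (i - e) + 1 := by omega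
    rw [h1]
    have h2 : ∀ r ∈ range (i - e + 1),
        i.choose (e + r) * (e + r).choose e * x^(e+r) * y^(i-(e+r))
          = (i.choose e * x^e) * ((i-e).choose r * (x^r * y^((i-e)-r))) := by
      intro r hr
      simp only [mem_range] at hr
      have hre : e ≤ e + r := Nat.le_add_right _ _
      have hri : e + r ≤ i := by omega
      rw [Nat.choose_mul hre]
      have : e + r - e = r := by omega
      rw [this]
      have : i - (e + r) = (i - e) - r := by omega
      rw [this, pow_add]
      ring
    rw [Finset.sum_congr rfl h2, ← Finset.mul_sum]
    congr 1
    rw [add_pow x y (i - e)]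
    apply Finset.sum_congr rfl
    intro r hr; push_cast; ring
  · push_neg at he
    rw [Nat.choose_eq_zero_of_lt he]
    rw [Finset.sum_eq_zero, zero_mul, zero_mul]
    intro r hr
    by_cases hri : r ≤ i
    · rw [Nat.choose_eq_zero_of_lt (by omega : r < e)]; ring
    · rw [Nat.choose_eq_zero_of_lt (by omega : i < r)]; ring

/-- Reindexing `{(j,r) : r ≤ j ≤ N}` as `{(r,s) : r + s ≤ N}`. -/
lemma reindexJR (N : ℕ) (g : ℕ → ℕ → ℕ) :
    ∑ j ∈ range (N+1), ∑ r ∈ range (j+1), g j r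
      = ∑ r ∈ range (N+1), ∑ s ∈ range (N+1-r), g (r+s) r := by
  rw [Finset.sum_sigma', Finset.sum_sigma']
  apply Finset.sum_nbij' (fun p => ⟨p.2, p.1 - p.2⟩) (fun q => ⟨q.1 + q.2, q.1⟩)
  · rintro ⟨j, r⟩ h
    simp only [mem_sigma, mem_range] at h ⊢; omega
  · rintro ⟨r, s⟩ h
    simp only [mem_sigma, mem_range] at h ⊢; omega
  · rintro ⟨j, r⟩ h; simp only [mem_sigma, mem_range] at h
    simp [show r + (j - r) = j by omega]
  · rintro ⟨r, s⟩ h; simp only [mem_sigma, mem_range] at h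
    simp [show r + s - r = s by omega]
  · rintro ⟨j, r⟩ h; simp only [mem_sigma, mem_range] at h
    have : r + (j - r) = j := by omega
    rw [this]

/-- The central combinatorial identity. -/
lemma claimA (N i d b c : ℕ) (hi : i ≤ N) (hd : d ≤ N) :
    ∑ j ∈ range (N+1), j.choose d * ∑ r ∈ range (j+1),
        i.choose r * (N-i).choose (j-r) * (c+1)^r * b^(i-r) * c^(j-r) * (b+1)^((N-i)-(j-r))
      = (b+c+1)^(N-d) * ∑ e ∈ range (d+1),
          i.choose e * (N-i).choose (d-e) * (c+1)^e * c^(d-e) := by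
  -- move `j.choose d` inside and reindex
  have step1 : ∀ j, j.choose d * ∑ r ∈ range (j+1),
        i.choose r * (N-i).choose (j-r) * (c+1)^r * b^(i-r) * c^(j-r) * (b+1)^((N-i)-(j-r))
      = ∑ r ∈ range (j+1), j.choose d *
        (i.choose r * (N-i).choose (j-r) * (c+1)^r * b^(i-r) * c^(j-r) * (b+1)^((N-i)-(j-r))) :=
    fun j => Finset.mul_sum _ _ _
  rw [Finset.sum_congr rfl fun j _ => step1 j]
  rw [reindexJR N (fun j r => j.choose d *
    (i.choose r * (N-i).choose (j-r) * (c+1)^r * b^(i-r) * c^(j-r) * (b+1)^((N-i)-(j-r))))]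
  -- simplify (r+s)-r = s
  have step2 : ∀ r s, (r+s).choose d *
        (i.choose r * (N-i).choose (r+s-r) * (c+1)^r * b^(i-r) * c^(r+s-r) * (b+1)^((N-i)-(r+s-r)))
      = (r+s).choose d * (i.choose r * (N-i).choose s * (c+1)^r * b^(i-r) * c^s * (b+1)^((N-i)-s)) := by
    intro r s; rw [Nat.add_sub_cancel_left]
  rw [Finset.sum_congr rfl fun r _ => Finset.sum_congr rfl fun s _ => step2 r s]
  -- extend the inner range to `range (N+1)`
  have step3 : ∀ r ∈ range (N+1), ∑ s ∈ range (N+1-r),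
        (r+s).choose d * (i.choose r * (N-i).choose s * (c+1)^r * b^(i-r) * c^s * (b+1)^((N-i)-s))
      = ∑ s ∈ range (N+1),
        (r+s).choose d * (i.choose r * (N-i).choose s * (c+1)^r * b^(i-r) * c^s * (b+1)^((N-i)-s)) := by
    intro r hr
    apply Finset.sum_subset
    · intro s hs; simp only [mem_range] at *; omega
    · intro s hs hns
      simp only [mem_range] at hs hns
      by_cases hri : r ≤ i
      · rw [Nat.choose_eq_zero_of_lt (by omega : N - i < s)]; ring
      · rw [Nat.choose_eq_zero_of_lt (by omega : i < r)]; ring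
  rw [Finset.sum_congr rfl step3]
  -- Vandermonde
  have vdm : ∀ r s : ℕ, (r+s).choose d = ∑ e ∈ range (d+1), r.choose e * s.choose (d-e) := by
    intro r s
    rw [Nat.add_choose_eq, Finset.Nat.sum_antidiagonal_eq_sum_range_succ
      (fun x y => r.choose x * s.choose y)]
  have step4 : ∀ r s : ℕ,
      (r+s).choose d * (i.choose r * (N-i).choose s * (c+1)^r * b^(i-r) * c^s * (b+1)^((N-i)-s))
        = ∑ e ∈ range (d+1), (i.choose r * r.choose e * (c+1)^r * b^(i-r)) *
            ((N-i).choose s * s.choose (d-e) * c^s * (b+1)^((N-i)-s)) := by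
    intro r s
    rw [vdm r s, Finset.sum_mul]
    apply Finset.sum_congr rfl
    intro e he; ring
  rw [Finset.sum_congr rfl fun r _ => Finset.sum_congr rfl fun s _ => step4 r s]
  -- exchange sums and split the product
  -- pull the `e`-sum to the outside
  rw [Finset.sum_congr rfl fun r _ => Finset.sum_comm]
  rw [Finset.sum_comm]
  -- split the double sum into a product of two sums
  have step5 : ∀ e ∈ range (d+1),
      ∑ r ∈ range (N+1), ∑ s ∈ range (N+1), (i.choose r * r.choose e * (c+1)^r * b^(i-r)) *
          ((N-i).choose s * s.choose (d-e) * c^s * (b+1)^((N-i)-s))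
        = (i.choose e * (c+1)^e * ((c+1)+b)^(i-e)) *
            ((N-i).choose (d-e) * c^(d-e) * (c+(b+1))^((N-i)-(d-e))) := by
    intro e he
    rw [← Finset.sum_mul_sum]
    rw [keyB N i e (c+1) b hi, keyB N (N-i) (d-e) c (b+1) (by omega)]
  rw [Finset.sum_congr rfl step5]
  -- recombine the powers
  rw [Finset.mul_sum]
  apply Finset.sum_congr rfl
  intro e he
  simp only [mem_range] at he
  by_cases h1 : e ≤ i
  · by_cases h2 : d - e ≤ N - i
    · have hp : (b+c+1)^(i-e) * (b+c+1)^((N-i)-(d-e)) = (b+c+1)^(N-d) := by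
        rw [← pow_add]; congr 1; omega
      calc i.choose e * (c+1)^e * ((c+1)+b)^(i-e) *
            ((N-i).choose (d-e) * c^(d-e) * (c+(b+1))^((N-i)-(d-e)))
          = ((b+c+1)^(i-e) * (b+c+1)^((N-i)-(d-e))) *
              (i.choose e * (N-i).choose (d-e) * (c+1)^e * c^(d-e)) := by ring_nf
        _ = _ := by rw [hp]
    · rw [Nat.choose_eq_zero_of_lt (by omega : N - i < d - e)]; ring
  · rw [Nat.choose_eq_zero_of_lt (by omega : i < e)]; ring

/-- Extend the truncated `Icc` range in the matrix entry to `range (j+1)`. -/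
lemma inner_ext (n i j a k : ℕ) (hi : i < n) (hj : j < n) :
    ∑ r ∈ Icc ((j+1)+(i+1)-(n+1)) (min j i),
        i.choose r * (n-(i+1)).choose (j-r) * k^r * (a-k)^(i-r) * (k-1)^(j-r)
          * (a-k+1)^((n-(i+1)) - (j-r))
      = ∑ r ∈ range (j+1),
        i.choose r * (n-(i+1)).choose (j-r) * k^r * (a-k)^(i-r) * (k-1)^(j-r)
          * (a-k+1)^((n-(i+1)) - (j-r)) := by
  apply Finset.sum_subset
  · intro r hr; simp only [mem_Icc] at hr; simp only [mem_range]; omega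
  · intro r hr hnr
    simp only [mem_range] at hr
    simp only [mem_Icc, not_and_or, not_le] at hnr
    by_cases hri : r ≤ i
    · rcases hnr with h | h
      · rw [Nat.choose_eq_zero_of_lt (by omega : n - (i+1) < j - r)]; ring
      · exfalso; omega
    · rw [Nat.choose_eq_zero_of_lt (by omega : i < r)]; ring

/-- The full row-sum computation over ℕ. -/
lemma rowSum (n a i d : ℕ) (hi : i < n) (hd : d < n) :
    ∑ j ∈ range n, j.choose d * ∑ k ∈ Icc 1 a,
        ∑ r ∈ Icc ((j+1)+(i+1)-(n+1)) (min j i),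
          i.choose r * (n-(i+1)).choose (j-r) * k^r * (a-k)^(i-r) * (k-1)^(j-r)
            * (a-k+1)^((n-(i+1)) - (j-r))
      = ∑ k ∈ Icc 1 a, a^(n-1-d) *
          ∑ e ∈ range (d+1), i.choose e * (n-1-i).choose (d-e) * k^e * (k-1)^(d-e) := by
  have h1 : ∀ j ∈ range n, j.choose d * ∑ k ∈ Icc 1 a,
        ∑ r ∈ Icc ((j+1)+(i+1)-(n+1)) (min j i),
          i.choose r * (n-(i+1)).choose (j-r) * k^r * (a-k)^(i-r) * (k-1)^(j-r)
            * (a-k+1)^((n-(i+1)) - (j-r))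
      = ∑ k ∈ Icc 1 a, j.choose d * ∑ r ∈ range (j+1),
          i.choose r * (n-(i+1)).choose (j-r) * k^r * (a-k)^(i-r) * (k-1)^(j-r)
            * (a-k+1)^((n-(i+1)) - (j-r)) := by
    intro j hj
    simp only [mem_range] at hj
    rw [Finset.mul_sum]
    exact Finset.sum_congr rfl fun k _ => by rw [inner_ext n i j a k hi hj]
  rw [Finset.sum_congr rfl h1, Finset.sum_comm]
  apply Finset.sum_congr rfl
  intro k hk
  simp only [mem_Icc] at hk
  have hN : n = (n-1) + 1 := by omega
  have e1 : ∀ j r : ℕ, i.choose r * (n-(i+1)).choose (j-r) * k^r * (a-k)^(i-r) * (k-1)^(j-r)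
        * (a-k+1)^((n-(i+1)) - (j-r))
      = i.choose r * ((n-1)-i).choose (j-r) * ((k-1)+1)^r * (a-k)^(i-r) * (k-1)^(j-r)
        * ((a-k)+1)^(((n-1)-i) - (j-r)) := by
    intro j r
    have : n - (i+1) = (n-1) - i := by omega
    rw [this, (by omega : (k-1)+1 = k)]
  calc ∑ j ∈ range n, j.choose d * ∑ r ∈ range (j+1),
          i.choose r * (n-(i+1)).choose (j-r) * k^r * (a-k)^(i-r) * (k-1)^(j-r)
            * (a-k+1)^((n-(i+1)) - (j-r))
      = ∑ j ∈ range ((n-1)+1), j.choose d * ∑ r ∈ range (j+1),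
          i.choose r * ((n-1)-i).choose (j-r) * ((k-1)+1)^r * (a-k)^(i-r) * (k-1)^(j-r)
            * ((a-k)+1)^(((n-1)-i) - (j-r)) := by
        rw [← hN]
        exact Finset.sum_congr rfl fun j _ =>
          congrArg _ (Finset.sum_congr rfl fun r _ => e1 j r)
    _ = ((a-k)+(k-1)+1)^((n-1)-d) * ∑ e ∈ range (d+1),
          i.choose e * ((n-1)-i).choose (d-e) * ((k-1)+1)^e * (k-1)^(d-e) := by
        exact claimA (n-1) i d (a-k) (k-1) (by omega) (by omega)
    _ = a^(n-1-d) * ∑ e ∈ range (d+1),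
          i.choose e * ((n-1)-i).choose (d-e) * k^e * (k-1)^(d-e) := by
        rw [(by omega : (a-k)+(k-1)+1 = a), (by omega : (k-1)+1 = k)]


open Finset Polynomial fwdDiff

noncomputable def bp (e : ℕ) : ℚ[X] := C ((e.factorial : ℚ)⁻¹) * descPochhammer ℚ e

noncomputable def bq (N m : ℕ) : ℚ[X] :=
  C ((m.factorial : ℚ)⁻¹) * (descPochhammer ℚ m).comp (C (N : ℚ) - X)

lemma bp_eval (s e : ℕ) : (bp e).eval (s : ℚ) = (s.choose e : ℚ) := by
  rw [bp, eval_mul, eval_C, descPochhammer_eval_eq_descFactorial,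
    Nat.descFactorial_eq_factorial_mul_choose]
  push_cast
  rw [← mul_assoc, inv_mul_cancel₀ (by exact_mod_cast e.factorial_ne_zero), one_mul]

lemma bq_eval (N s m : ℕ) (h : s ≤ N) : (bq N m).eval (s : ℚ) = ((N - s).choose m : ℚ) := by
  rw [bq, eval_mul, eval_C, eval_comp, eval_sub, eval_C, eval_X,
    (by push_cast [h] ; ring : (N : ℚ) - s = ((N - s : ℕ) : ℚ)),
    descPochhammer_eval_eq_descFactorial, Nat.descFactorial_eq_factorial_mul_choose]
  push_cast
  rw [← mul_assoc, inv_mul_cancel₀ (by exact_mod_cast m.factorial_ne_zero), one_mul]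

lemma bp_natDegree (e : ℕ) : (bp e).natDegree ≤ e := by
  refine (natDegree_C_mul_le _ _).trans ?_
  rw [descPochhammer_natDegree]

lemma bq_natDegree (N m : ℕ) : (bq N m).natDegree ≤ m := by
  refine (natDegree_C_mul_le _ _).trans ?_
  refine (natDegree_comp_le).trans ?_
  have : (C (N : ℚ) - X).natDegree ≤ 1 := by
    rw [← neg_sub, natDegree_neg]; exact natDegree_X_sub_C_le _
  calc (descPochhammer ℚ m).natDegree * (C (N:ℚ) - X).natDegree
      ≤ (descPochhammer ℚ m).natDegree * 1 := Nat.mul_le_mul_left _ this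
    _ = m := by rw [mul_one, descPochhammer_natDegree]

lemma bp_coeff (e : ℕ) : (bp e).coeff e = (e.factorial : ℚ)⁻¹ := by
  rw [bp, coeff_C_mul]
  have h := (monic_descPochhammer ℚ e).coeff_natDegree
  rw [descPochhammer_natDegree] at h
  rw [h, mul_one]

lemma bq_coeff (N m : ℕ) : (bq N m).coeff m = (-1)^m * (m.factorial : ℚ)⁻¹ := by
  rw [bq, coeff_C_mul]
  have hdeg : (C (N:ℚ) - X).natDegree = 1 := by
    rw [← neg_sub, natDegree_neg, natDegree_X_sub_C]
  have hcomp : ((descPochhammer ℚ m).comp (C (N:ℚ) - X)).natDegree = m := by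
    rw [natDegree_comp, hdeg, descPochhammer_natDegree, mul_one]
  have hlc : ((descPochhammer ℚ m).comp (C (N:ℚ) - X)).leadingCoeff = (-1)^m := by
    rw [leadingCoeff_comp (by rw [hdeg]; norm_num)]
    have h1 : (descPochhammer ℚ m).leadingCoeff = 1 := (monic_descPochhammer ℚ m)
    have h2 : (C (N:ℚ) - X).leadingCoeff = -1 := by
      rw [← neg_sub, leadingCoeff_neg, (monic_X_sub_C ((N:ℚ))).leadingCoeff]
    rw [h1, h2, one_mul, descPochhammer_natDegree]
  have key : ((descPochhammer ℚ m).comp (C (N:ℚ) - X)).coeff m = (-1)^m := by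
    have h := coeff_natDegree (p := (descPochhammer ℚ m).comp (C (N:ℚ) - X))
    rw [hcomp, hlc] at h
    exact h
  rw [key]; ring

/-- Forward differences commute with the `ℤ → ℚ` cast. -/
lemma fwdDiff_cast (f : ℕ → ℤ) (e : ℕ) :
    (Δ_[1])^[e] (fun s : ℕ => (f s : ℚ)) = fun s => (((Δ_[1])^[e] f s : ℤ) : ℚ) := by
  induction e generalizing f with
  | zero => simp
  | succ e ih =>
    rw [Function.iterate_succ_apply, Function.iterate_succ_apply]
    have : (Δ_[1] fun s : ℕ => (f s : ℚ)) = fun s : ℕ => ((Δ_[1] f s : ℤ) : ℚ) := by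
      funext s; simp [fwdDiff]
    rw [this, ih]

lemma fwdDiff_binom (m e : ℕ) :
    (Δ_[1])^[e] (fun s : ℕ => (s.choose m : ℚ)) 0 = if e = m then 1 else 0 := by
  have := fwdDiff_cast (fun s : ℕ => (s.choose m : ℤ)) e
  have h2 : (fun s : ℕ => ((s.choose m : ℤ) : ℚ)) = fun s : ℕ => (s.choose m : ℚ) := by
    push_cast; rfl
  rw [← h2, this]
  have h3 := fwdDiff_iter_choose_zero m e
  simp only [h3]
  split <;> norm_num

/-- Every polynomial of degree ≤ d is a combination of the `bp m`, `m ≤ d`,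
with top coefficient `d! * p.coeff d`. -/
lemma bp_expansion (d : ℕ) : ∀ p : ℚ[X], p.natDegree ≤ d →
    ∃ c : ℕ → ℚ, p = ∑ m ∈ range (d+1), C (c m) * bp m ∧
      c d = d.factorial * p.coeff d := by
  induction d with
  | zero =>
    intro p hp
    refine ⟨fun _ => p.coeff 0, ?_, by norm_num⟩
    rw [eq_C_of_natDegree_le_zero hp]
    simp [bp, descPochhammer]
  | succ d ih =>
    intro p hp
    set q := p - C ((d+1).factorial * p.coeff (d+1)) * bp (d+1) with hq
    have hqc : q.coeff (d+1) = 0 := by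
      rw [hq, coeff_sub, coeff_C_mul, bp_coeff]
      have : ((d+1).factorial : ℚ) ≠ 0 := by exact_mod_cast (d+1).factorial_ne_zero
      field_simp
      ring
    have hqd : q.natDegree ≤ d := by
      refine natDegree_le_iff_coeff_eq_zero.mpr fun m hm => ?_
      rcases Nat.lt_or_ge (d+1) m with h | h
      · rw [hq, coeff_sub, coeff_eq_zero_of_natDegree_lt (lt_of_le_of_lt hp h),
          coeff_eq_zero_of_natDegree_lt
            (lt_of_le_of_lt ((natDegree_C_mul_le _ _).trans (bp_natDegree _)) h), sub_zero]
      · have : m = d + 1 := by omega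
        rw [this]; exact hqc
    obtain ⟨c, hc1, _⟩ := ih q hqd
    refine ⟨fun m => if m = d+1 then (d+1).factorial * p.coeff (d+1) else c m, ?_, by simp⟩
    rw [Finset.sum_range_succ]
    have : ∑ m ∈ range (d+1), C (if m = d+1 then ((d+1).factorial : ℚ) * p.coeff (d+1) else c m)
        * bp m = ∑ m ∈ range (d+1), C (c m) * bp m := by
      apply Finset.sum_congr rfl
      intro m hm
      simp only [mem_range] at hm
      rw [if_neg (by omega)]
    have hct : (fun m => if m = d + 1 then ((d+1).factorial:ℚ) * p.coeff (d+1) else c m) (d+1)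
        = ((d+1).factorial:ℚ) * p.coeff (d+1) := by simp
    rw [this, hct, ← hc1, hq]
    ring

/-- Main forward-difference evaluation lemma. -/
lemma fwdDiff_eval (p : ℚ[X]) (e : ℕ) (hp : p.natDegree ≤ e) :
    (Δ_[1])^[e] (fun s : ℕ => p.eval (s : ℚ)) 0 = e.factorial * p.coeff e := by
  obtain ⟨c, hc1, hc2⟩ := bp_expansion e p hp
  have hfun : (fun s : ℕ => p.eval (s : ℚ))
      = ∑ m ∈ range (e+1), c m • (fun s : ℕ => (s.choose m : ℚ)) := by
    funext s
    rw [hc1, eval_finset_sum]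
    simp only [Finset.sum_apply, Pi.smul_apply, smul_eq_mul]
    exact Finset.sum_congr rfl fun m _ => by rw [eval_mul, eval_C, bp_eval]
  rw [hfun, fwdDiff_iter_finset_sum]
  have : ∀ m ∈ range (e+1), (Δ_[1])^[e] (c m • fun s : ℕ => (s.choose m : ℚ)) 0
      = c m * (if e = m then 1 else 0) := by
    intro m _
    rw [fwdDiff_iter_const_smul]
    simp only [Pi.smul_apply, smul_eq_mul]
    rw [fwdDiff_binom]
  rw [Finset.sum_apply, Finset.sum_congr rfl this, ← hc2]
  rw [Finset.sum_eq_single e (fun m _ hm => by rw [if_neg (Ne.symm hm), mul_zero])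
    (fun h => absurd (self_mem_range_succ e) h)]
  rw [if_pos rfl, mul_one]

noncomputable def Rpoly (n a d : ℕ) : ℚ[X] :=
  C ((a:ℚ)^(n-1-d) / (a:ℚ)^n) *
    ∑ k ∈ Icc 1 a, ∑ e ∈ range (d+1),
      C ((k:ℚ)^e * ((k:ℚ)-1)^(d-e)) * (bp e * bq (n-1) (d-e))

noncomputable def Wmat (n : ℕ) : Matrix (Fin n) (Fin n) ℚ :=
  fun d j => (j.val.choose d.val : ℚ)

noncomputable def Tmat (n a : ℕ) : Matrix (Fin n) (Fin n) ℚ :=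
  fun d e => (Δ_[1])^[e.val] (fun s : ℕ => (Rpoly n a d.val).eval (s:ℚ)) 0

lemma coeff_bp_bq (N e m : ℕ) :
    (bp e * bq N m).coeff (e+m)
      = (e.factorial:ℚ)⁻¹ * ((-1)^m * (m.factorial:ℚ)⁻¹) := by
  rw [coeff_mul_add_eq_of_natDegree_le (bp_natDegree e) (bq_natDegree N m), bp_coeff, bq_coeff]

lemma Rpoly_natDegree (n a d : ℕ) : (Rpoly n a d).natDegree ≤ d := by
  refine (natDegree_C_mul_le _ _).trans ?_
  refine natDegree_sum_le_of_forall_le _ _ fun k _ => ?_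
  refine natDegree_sum_le_of_forall_le _ _ fun e he => ?_
  simp only [mem_range] at he
  refine (natDegree_C_mul_le _ _).trans ?_
  refine (natDegree_mul_le).trans ?_
  have := bp_natDegree e
  have := bq_natDegree (n-1) (d-e)
  omega

lemma Rpoly_eval (n a d i : ℕ) (hi : i ≤ n-1) :
    (Rpoly n a d).eval (i:ℚ)
      = ((a:ℚ)^(n-1-d) / (a:ℚ)^n) * ∑ k ∈ Icc 1 a, ∑ e ∈ range (d+1),
          (k:ℚ)^e * ((k:ℚ)-1)^(d-e) * (i.choose e : ℚ) * (((n-1-i).choose (d-e) : ℚ)) := by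
  rw [Rpoly, eval_mul, eval_C, eval_finset_sum]
  congr 1
  refine Finset.sum_congr rfl fun k _ => ?_
  rw [eval_finset_sum]
  refine Finset.sum_congr rfl fun e _ => ?_
  rw [eval_mul, eval_C, eval_mul, bp_eval, bq_eval _ _ _ hi]
  ring

lemma Rpoly_coeff (n a d : ℕ) (hd : d ≤ n-1) (hn : 1 ≤ n) (ha : 1 ≤ a) :
    (Rpoly n a d).coeff d = ((a:ℚ)^d * d.factorial)⁻¹ := by
  rw [Rpoly, coeff_C_mul, finset_sum_coeff]
  have inner : ∀ k : ℕ, 1 ≤ k →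
      (∑ e ∈ range (d+1), C ((k:ℚ)^e * ((k:ℚ)-1)^(d-e)) * (bp e * bq (n-1) (d-e))).coeff d
        = (d.factorial : ℚ)⁻¹ := by
    intro k hk
    rw [finset_sum_coeff]
    have term : ∀ e ∈ range (d+1),
        (C ((k:ℚ)^e * ((k:ℚ)-1)^(d-e)) * (bp e * bq (n-1) (d-e))).coeff d
          = (d.factorial:ℚ)⁻¹ * ((k:ℚ)^e * (1-(k:ℚ))^(d-e) * (d.choose e : ℚ)) := by
      intro e he
      simp only [mem_range] at he
      have hde : d = e + (d - e) := by omega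
      have hcoe := coeff_bp_bq (n-1) e (d-e)
      rw [← hde] at hcoe
      rw [coeff_C_mul, hcoe]
      have h1 : ((-1:ℚ))^(d-e) * ((k:ℚ)-1)^(d-e) = (1-(k:ℚ))^(d-e) := by
        rw [← mul_pow]; congr 1; ring
      have h2 : ((d.choose e : ℚ)) * (e.factorial:ℚ) * ((d-e).factorial:ℚ)
          = (d.factorial:ℚ) := by
        exact_mod_cast congrArg (Nat.cast : ℕ → ℚ)
          (Nat.choose_mul_factorial_mul_factorial (by omega : e ≤ d))
      have he0 : (e.factorial:ℚ) ≠ 0 := by exact_mod_cast e.factorial_ne_zero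
      have hde0 : ((d-e).factorial:ℚ) ≠ 0 := by exact_mod_cast (d-e).factorial_ne_zero
      have hd0 : (d.factorial:ℚ) ≠ 0 := by exact_mod_cast d.factorial_ne_zero
      field_simp
      rw [← h1, ← h2]
      ring
    rw [Finset.sum_congr rfl term, ← Finset.mul_sum]
    have : ∑ e ∈ range (d+1), (k:ℚ)^e * (1-(k:ℚ))^(d-e) * (d.choose e : ℚ)
        = (((k:ℚ) + (1-(k:ℚ)))^d) := by
      rw [add_pow]
    rw [this]
    norm_num
  have : ∀ k ∈ Icc 1 a,
      (∑ e ∈ range (d+1), C ((k:ℚ)^e * ((k:ℚ)-1)^(d-e)) * (bp e * bq (n-1) (d-e))).coeff d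
        = (d.factorial : ℚ)⁻¹ := by
    intro k hk; simp only [mem_Icc] at hk; exact inner k hk.1
  rw [Finset.sum_congr rfl this, Finset.sum_const, Nat.card_Icc]
  have ha0 : (a:ℚ) ≠ 0 := by positivity
  have hd0 : (d.factorial:ℚ) ≠ 0 := by exact_mod_cast d.factorial_ne_zero
  have hpow : (a:ℚ)^n = (a:ℚ)^(n-1-d) * (a:ℚ)^(d+1) := by
    rw [← pow_add]; congr 1; omega
  rw [hpow]
  simp only [Nat.add_sub_cancel, nsmul_eq_mul]
  field_simp
  ring

lemma WP_eval (n a : ℕ) (d i : Fin n) :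
    (Wmat n * singleCardMatrix n a) d i = (Rpoly n a d.val).eval (i.val : ℚ) := by
  have hi : i.val < n := i.isLt
  have hd : d.val < n := d.isLt
  rw [Matrix.mul_apply]
  simp only [Wmat, singleCardMatrix]
  have expand : ∀ j : Fin n, (j.val.choose d.val : ℚ) *
      (((∑ k ∈ Icc 1 a, ∑ r ∈ Icc ((j.val+1)+(i.val+1)-(n+1)) (min j.val i.val),
          i.val.choose r * (n-(i.val+1)).choose (j.val-r) * k^r * (a-k)^(i.val-r) * (k-1)^(j.val-r)
            * (a-k+1)^((n-(i.val+1)) - (j.val-r)) : ℕ) : ℚ) / (a:ℚ)^n)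
      = ((j.val.choose d.val * ∑ k ∈ Icc 1 a, ∑ r ∈ Icc ((j.val+1)+(i.val+1)-(n+1)) (min j.val i.val),
          i.val.choose r * (n-(i.val+1)).choose (j.val-r) * k^r * (a-k)^(i.val-r) * (k-1)^(j.val-r)
            * (a-k+1)^((n-(i.val+1)) - (j.val-r)) : ℕ) : ℚ) / (a:ℚ)^n := by
    intro j; push_cast; ring
  rw [Finset.sum_congr rfl fun j _ => expand j]
  rw [← Finset.sum_div]
  rw [Fin.sum_univ_eq_sum_range (fun j => ((j.choose d.val * ∑ k ∈ Icc 1 a,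
      ∑ r ∈ Icc ((j+1)+(i.val+1)-(n+1)) (min j i.val),
        i.val.choose r * (n-(i.val+1)).choose (j-r) * k^r * (a-k)^(i.val-r) * (k-1)^(j-r)
          * (a-k+1)^((n-(i.val+1)) - (j-r)) : ℕ) : ℚ)) n]
  rw [← Nat.cast_sum, rowSum n a i.val d.val hi hd]
  have cast1 : ((∑ k ∈ Icc 1 a, a^(n-1-d.val) * ∑ e ∈ range (d.val+1),
        i.val.choose e * (n-1-i.val).choose (d.val-e) * k^e * (k-1)^(d.val-e) : ℕ) : ℚ)
      = (a:ℚ)^(n-1-d.val) * ∑ k ∈ Icc 1 a, ∑ e ∈ range (d.val+1),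
          (k:ℚ)^e * ((k:ℚ)-1)^(d.val-e) * (i.val.choose e : ℚ) * ((n-1-i.val).choose (d.val-e) : ℚ) := by
    rw [Nat.cast_sum, Finset.mul_sum]
    refine Finset.sum_congr rfl fun k hk => ?_
    simp only [mem_Icc] at hk
    push_cast [Nat.cast_sub hk.1]
    rw [Finset.mul_sum, Finset.mul_sum]
    refine Finset.sum_congr rfl fun e he => ?_
    ring
  rw [cast1, Rpoly_eval n a d.val i.val (by omega)]
  ring

lemma TW_eval (n a : ℕ) (d i : Fin n) :
    (Tmat n a * Wmat n) d i = (Rpoly n a d.val).eval (i.val : ℚ) := by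
  have hi : i.val < n := i.isLt
  rw [Matrix.mul_apply]
  simp only [Tmat, Wmat]
  set f : ℕ → ℚ := fun s => (Rpoly n a d.val).eval (s:ℚ) with hf
  rw [Fin.sum_univ_eq_sum_range (fun e => (Δ_[1])^[e] f 0 * (i.val.choose e : ℚ)) n]
  have hsub : ∑ e ∈ range n, (Δ_[1])^[e] f 0 * (i.val.choose e : ℚ)
      = ∑ e ∈ range (i.val+1), (Δ_[1])^[e] f 0 * (i.val.choose e : ℚ) := by
    symm; apply Finset.sum_subset
    · intro e he; simp only [mem_range] at *; omega
    · intro e he hne; simp only [mem_range] at he hne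
      rw [Nat.choose_eq_zero_of_lt (by omega), Nat.cast_zero, mul_zero]
  rw [hsub]
  have GN := shift_eq_sum_fwdDiff_iter (1:ℕ) f i.val 0
  simp only [smul_eq_mul, mul_one, zero_add, nsmul_eq_mul] at GN
  rw [Finset.sum_congr rfl (fun e _ => mul_comm ((Δ_[1])^[e] f 0) ((i.val.choose e : ℚ)))]
  exact GN.symm

lemma Tmat_zero (n a : ℕ) (d e : Fin n) (h : d < e) : Tmat n a d e = 0 := by
  rw [Tmat, fwdDiff_eval _ _ ((Rpoly_natDegree n a d.val).trans (by omega : d.val ≤ e.val)),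
    coeff_eq_zero_of_natDegree_lt (lt_of_le_of_lt (Rpoly_natDegree n a d.val) h), mul_zero]

lemma Tmat_diag (n a : ℕ) (hn : 1 ≤ n) (ha : 1 ≤ a) (d : Fin n) :
    Tmat n a d d = 1 / (a:ℚ)^d.val := by
  rw [Tmat, fwdDiff_eval _ _ (Rpoly_natDegree n a d.val),
    Rpoly_coeff n a d.val (by omega) hn ha]
  have h1 : ((d.val).factorial : ℚ) ≠ 0 := by exact_mod_cast (d.val).factorial_ne_zero
  have h2 : (a:ℚ) ≠ 0 := by positivity
  field_simp

lemma Wmat_det (n : ℕ) : (Wmat n).det = 1 := by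
  rw [Matrix.det_of_upperTriangular (M := Wmat n) (by
    intro i j hij
    simp only [id] at hij
    rw [Wmat]
    exact_mod_cast congrArg (Nat.cast : ℕ → ℚ) (Nat.choose_eq_zero_of_lt hij))]
  refine Finset.prod_eq_one fun d _ => ?_
  rw [Wmat]
  simp [Nat.choose_self]

lemma charpoly_eq_of_mul {n : ℕ} (W T P : Matrix (Fin n) (Fin n) ℚ)
    (hW : W.det ≠ 0) (h : W * P = T * W) : P.charpoly = T.charpoly := by
  have h1 : W.map C * Matrix.charmatrix P = Matrix.charmatrix T * W.map C := by
    unfold Matrix.charmatrix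
    simp only [RingHom.mapMatrix_apply]
    rw [mul_sub, sub_mul]
    congr 1
    · exact (Matrix.scalar_commute (X : ℚ[X]) (fun r => Commute.all X r) (W.map C)).symm
    · show W.map C * P.map C = T.map C * W.map C
      rw [← Matrix.map_mul, ← Matrix.map_mul, h]
  have h2 := congrArg Matrix.det h1
  rw [Matrix.det_mul, Matrix.det_mul] at h2
  have h3 : (W.map C).det = C W.det := (RingHom.map_det C W).symm
  rw [h3] at h2
  have h4 : (C W.det : ℚ[X]) ≠ 0 := fun hc => hW (by
    simpa using congrArg (fun p => Polynomial.coeff p 0) hc)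
  unfold Matrix.charpoly
  exact mul_left_cancel₀ h4 (by rw [h2]; ring)


open Polynomial in
/-- The eigenvalues of the single-card transition matrix form the geometric series
`1, 1/a, …, 1/a^{n-1}`: its characteristic polynomial is `∏_{m=0}^{n-1} (X - a^{-m})`. -/
theorem singleCardMatrix_charpoly (n a : ℕ) (hn : 1 ≤ n) (ha : 1 ≤ a) :
    (singleCardMatrix n a).charpoly
      = ∏ m ∈ Finset.range n, (X - C (1 / (a : ℚ) ^ m)) := by
  have hWT : Wmat n * singleCardMatrix n a = Tmat n a * Wmat n := by
    ext d i; rw [WP_eval, TW_eval]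
  have hdet : (Wmat n).det ≠ 0 := by rw [Wmat_det]; norm_num
  rw [charpoly_eq_of_mul (Wmat n) (Tmat n a) _ hdet hWT]
  have htri : (Matrix.charmatrix (Tmat n a)).BlockTriangular OrderDual.toDual := by
    intro i j hij
    have hij' : i < j := hij
    rw [Matrix.charmatrix_apply_ne _ _ _ (ne_of_lt hij'), Tmat_zero n a i j hij',
      map_zero, neg_zero]
  rw [Matrix.charpoly, Matrix.det_of_lowerTriangular _ htri]
  have hdiag : ∀ i : Fin n, Matrix.charmatrix (Tmat n a) i i = X - C (1/(a:ℚ)^i.val) := by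
    intro i
    rw [Matrix.charmatrix_apply_eq, Tmat_diag n a hn ha]
  rw [Finset.prod_congr rfl fun i _ => hdiag i]
  exact Fin.prod_univ_eq_prod_range (fun m => X - C (1/(a:ℚ)^m)) n
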